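/- Let A be an n×n complex matrix with characteristic polynomial χ_A, let v ∈ ℂⁿ be an eigenvector of A with A·v = λ·v, and let q ∈ ℂⁿ be an arbitrary vector. Then the rank-one update A + v·qᵀ satisfies the characteristic polynomial identity χ_{A + v qᵀ}(X)·(X − λ) = χ_A(X)·(X − (λ + qᵀv)); that is, the eigenvalues of A + v qᵀ are those of A with the eigenvalue λ replaced by λ + qᵀv. -/

import Mathlib

open Polynomial Matrix

private noncomputable def brauerF : ℂ[X] →+* RatFunc ℂ := algebraMap ℂ[X] (RatFunc ℂ)

set_option maxHeartbeats 1000000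
set_option synthInstance.maxHeartbeats 1000000

private lemma brauerF_inj : Function.Injective brauerF :=
  IsFractionRing.injective ℂ[X] (RatFunc ℂ)

/-- Brauer's theorem: a rank-one update `A + v qᵀ` along an eigenvector `v` of `A`
(with `A v = μ v`) replaces the eigenvalue `μ` by `μ + qᵀ v`, in the sense of the
characteristic polynomial identity
`χ_{A + v qᵀ}(X) (X − μ) = χ_A(X) (X − (μ + qᵀ v))`. -/
theorem brauer {n : ℕ} (A : Matrix (Fin n) (Fin n) ℂ) (v q : Fin n → ℂ) (μ : ℂ)
    (hv : v ≠ 0) (hev : A.mulVec v = μ • v) :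
    (A + vecMulVec v q).charpoly * (X - C μ) =
      A.charpoly * (X - C (μ + q ⬝ᵥ v)) := by
  set f := brauerF with hfdef
  apply brauerF_inj
  -- notation in RatFunc ℂ
  set x : RatFunc ℂ := f X with hx
  set μ' : RatFunc ℂ := f (C μ) with hμ'
  set w : Fin n → RatFunc ℂ := fun i => f (C (v i)) with hw
  set r : Fin n → RatFunc ℂ := fun j => f (C (q j)) with hr
  set N : Matrix (Fin n) (Fin n) (RatFunc ℂ) := (charmatrix A).map f with hN
  have hdetN : N.det = f A.charpoly := by
    rw [hN, ← RingHom.mapMatrix_apply, ← RingHom.map_det]; rfl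
  have hAchar : A.charpoly ≠ 0 := A.charpoly_monic.ne_zero
  have hdet_ne : N.det ≠ 0 := by
    rw [hdetN]
    intro h
    exact hAchar (brauerF_inj (by simpa using h))
  have hdet_unit : IsUnit N.det := isUnit_iff_ne_zero.mpr hdet_ne
  have hxμ : x - μ' ≠ 0 := by
    rw [hx, hμ', ← map_sub]
    intro h
    have : (X - C μ : ℂ[X]) = 0 := brauerF_inj (by simpa using h)
    exact X_sub_C_ne_zero μ this
  -- the eigenvector equation over K
  have hNw : N.mulVec w = (x - μ') • w := by
    funext i
    simp only [hN, mulVec, dotProduct, map_apply, charmatrix_apply, Pi.smul_apply,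
      smul_eq_mul, hw]
    have : ∀ j, f ((Matrix.diagonal fun _ : Fin n => (X : ℂ[X])) i j - C (A i j)) * f (C (v j))
        = f (((Matrix.diagonal fun _ : Fin n => (X : ℂ[X])) i j - C (A i j)) * C (v j)) := by
      intro j; rw [_root_.map_mul]
    simp_rw [this, ← map_sum]
    rw [hx, hμ', ← map_sub, ← _root_.map_mul]
    congr 1
    have hev' := congrFun hev i
    simp only [mulVec, dotProduct, Pi.smul_apply, smul_eq_mul] at hev'
    simp only [sub_mul, Finset.sum_sub_distrib]
    rw [Finset.sum_eq_single i (fun j _ hj => by simp [Matrix.diagonal_apply_ne _ (Ne.symm hj)])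
      (by simp)]
    simp only [Matrix.diagonal_apply_eq]
    have : (∑ j, C (A i j) * C (v j)) = C (μ * v i) := by
      simp_rw [← C_mul, ← map_sum]
      exact congrArg C hev'
    rw [this]
    ring_nf
    simp [C_mul]
    ring
  have hNinvw : N⁻¹ *ᵥ w = (x - μ')⁻¹ • w := by
    have h1 : N⁻¹ *ᵥ (N *ᵥ w) = w := by
      rw [mulVec_mulVec, nonsing_inv_mul N hdet_unit, one_mulVec]
    rw [hNw, mulVec_smul] at h1
    calc N⁻¹ *ᵥ w = (x - μ')⁻¹ • ((x - μ') • (N⁻¹ *ᵥ w)) := by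
          rw [smul_smul, inv_mul_cancel₀ hxμ, one_smul]
      _ = (x - μ')⁻¹ • w := by rw [h1]
  -- map the characteristic matrix of the updated matrix
  have hcm : (charmatrix (A + vecMulVec v q)).map f
      = N + Matrix.replicateCol Unit (-w) * Matrix.replicateRow Unit r := by
    have : charmatrix (A + vecMulVec v q) = charmatrix A - (vecMulVec v q).map C := by
      ext i j
      simp [charmatrix_apply, sub_sub]
    rw [this]
    ext i j
    simp [hN, vecMulVec_eq Unit (α := RatFunc ℂ), Matrix.mul_apply, sub_eq_add_neg, hw, hr, _root_.map_mul,
      vecMulVec_apply]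
  -- matrix determinant lemma
  have hdl := Matrix.det_add_replicateCol_mul_replicateRow (ι := Unit) hdet_unit (-w) r
  -- compute the 1×1 determinant
  have h11 : (1 + Matrix.replicateRow Unit r * N⁻¹ * Matrix.replicateCol Unit (-w)).det
      = 1 - (x - μ')⁻¹ * f (C (q ⬝ᵥ v)) := by
    rw [det_unique]
    simp only [Matrix.add_apply, Matrix.one_apply_eq, Matrix.mul_apply, Matrix.replicateCol_apply,
      Matrix.replicateRow_apply, Finset.univ_unique, Finset.sum_singleton]
    have : (∑ j, (∑ k, r k * N⁻¹ k j) * (-w) j) = -(r ⬝ᵥ (N⁻¹ *ᵥ w)) := by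
      simp only [dotProduct, mulVec, Finset.mul_sum, Finset.sum_mul, Pi.neg_apply, mul_neg,
        ← Finset.sum_neg_distrib]
      rw [Finset.sum_comm]
      exact Finset.sum_congr rfl fun k _ => Finset.sum_congr rfl fun j _ => by ring
    rw [this, hNinvw]
    have : r ⬝ᵥ ((x - μ')⁻¹ • w) = (x - μ')⁻¹ * f (C (q ⬝ᵥ v)) := by
      rw [dotProduct_smul]
      congr 1
      rw [show f (C (q ⬝ᵥ v)) = ∑ i, f (C (q i * v i)) by rw [dotProduct, map_sum, map_sum]]
      simp only [dotProduct, hr, hw, smul_eq_mul]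
      exact Finset.sum_congr rfl fun i _ => by rw [← f.map_mul, ← C_mul]
    rw [this]
    ring
  -- put it together
  have key : f ((A + vecMulVec v q).charpoly)
      = f A.charpoly * (1 - (x - μ')⁻¹ * f (C (q ⬝ᵥ v))) := by
    have : f ((A + vecMulVec v q).charpoly)
        = ((charmatrix (A + vecMulVec v q)).map f).det := by
      rw [← RingHom.mapMatrix_apply, ← RingHom.map_det]; rfl
    rw [this, hcm, hdl, h11, hdetN]
  show f _ = f _
  rw [_root_.map_mul, _root_.map_mul, key, map_sub, map_sub, ← hx, ← hμ', map_add]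
  have h2 : (1 - (x - μ')⁻¹ * f (C (q ⬝ᵥ v))) * (x - μ')
      = x - (μ' + f (C (q ⬝ᵥ v))) := by
    field_simp
    ring
  rw [mul_assoc, h2, _root_.map_add, ← hμ']
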